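/- Let z₁, z₂, λ, Q ∈ ℝ and let φ₀, u₀, c₁₀, c₂₀, φ₁, u₁, c₁₁, c₂₁ : ℝ → ℝ be differentiable with c₁₀(ξ) ≠ 0 and c₂₀(ξ) ≠ 0 for all ξ. Suppose (φ₀,u₀,c₁₀,c₂₀) solves φ₀' = u₀, u₀' = −z₁c₁₀ − z₂c₂₀ − Q, c₁₀' = −z₁c₁₀u₀, c₂₀' = −z₂c₂₀u₀, and (φ₁,u₁,c₁₁,c₂₁) solves φ₁' = u₁, u₁' = −z₁c₁₁ − z₂c₂₁, c₁₁' = −z₁c₁₁u₀ − z₁c₁₀u₁ + u₀((λ+1)z₂c₁₀c₂₀ + 2z₁c₁₀²), c₂₁' = −z₂c₂₁u₀ − z₂c₂₀u₁ + u₀((λ+1)z₁c₁₀c₂₀ + 2λz₂c₂₀²). Then the three quantities z₁φ₁ + c₁₁/c₁₀ + 2c₁₀ + (λ+1)c₂₀, z₂φ₁ + c₂₁/c₂₀ + 2λc₂₀ + (λ+1)c₁₀, and u₀u₁ − c₁₁ − c₂₁ − (λ+1)c₁₀c₂₀ − c₁₀² − λc₂₀² + Qφ₁ are constant in ξ. 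-/

import Mathlib

private lemma const_of_hasDerivAt_zero (F : ℝ → ℝ)
    (h : ∀ x, HasDerivAt F 0 x) (ξ : ℝ) : F ξ = F 0 :=
  is_const_of_deriv_eq_zero (fun x => (h x).differentiableAt)
    (fun x => (h x).deriv) ξ 0

/-- Lemma 3.2 (first order): first integrals of the first-order layer system
with constant permanent charge `Q`. -/
theorem first_integrals_first_order_with_charge
    (z₁ z₂ lam Q : ℝ) (φ₀ u₀ c₁₀ c₂₀ φ₁ u₁ c₁₁ c₂₁ : ℝ → ℝ)
    (hc₁₀ne : ∀ ξ, c₁₀ ξ ≠ 0) (hc₂₀ne : ∀ ξ, c₂₀ ξ ≠ 0)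
    (hφ₀ : ∀ ξ, HasDerivAt φ₀ (u₀ ξ) ξ)
    (hu₀ : ∀ ξ, HasDerivAt u₀ (-z₁ * c₁₀ ξ - z₂ * c₂₀ ξ - Q) ξ)
    (hc₁₀ : ∀ ξ, HasDerivAt c₁₀ (-z₁ * c₁₀ ξ * u₀ ξ) ξ)
    (hc₂₀ : ∀ ξ, HasDerivAt c₂₀ (-z₂ * c₂₀ ξ * u₀ ξ) ξ)
    (hφ₁ : ∀ ξ, HasDerivAt φ₁ (u₁ ξ) ξ)
    (hu₁ : ∀ ξ, HasDerivAt u₁ (-z₁ * c₁₁ ξ - z₂ * c₂₁ ξ) ξ)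
    (hc₁₁ : ∀ ξ, HasDerivAt c₁₁
      (-z₁ * c₁₁ ξ * u₀ ξ - z₁ * c₁₀ ξ * u₁ ξ +
        u₀ ξ * ((lam + 1) * z₂ * c₁₀ ξ * c₂₀ ξ + 2 * z₁ * c₁₀ ξ ^ 2)) ξ)
    (hc₂₁ : ∀ ξ, HasDerivAt c₂₁
      (-z₂ * c₂₁ ξ * u₀ ξ - z₂ * c₂₀ ξ * u₁ ξ +
        u₀ ξ * ((lam + 1) * z₁ * c₁₀ ξ * c₂₀ ξ + 2 * lam * z₂ * c₂₀ ξ ^ 2)) ξ) :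
    (∀ ξ, z₁ * φ₁ ξ + c₁₁ ξ / c₁₀ ξ + 2 * c₁₀ ξ + (lam + 1) * c₂₀ ξ =
          z₁ * φ₁ 0 + c₁₁ 0 / c₁₀ 0 + 2 * c₁₀ 0 + (lam + 1) * c₂₀ 0) ∧
    (∀ ξ, z₂ * φ₁ ξ + c₂₁ ξ / c₂₀ ξ + 2 * lam * c₂₀ ξ + (lam + 1) * c₁₀ ξ =
          z₂ * φ₁ 0 + c₂₁ 0 / c₂₀ 0 + 2 * lam * c₂₀ 0 + (lam + 1) * c₁₀ 0) ∧
    (∀ ξ, u₀ ξ * u₁ ξ - c₁₁ ξ - c₂₁ ξ - (lam + 1) * c₁₀ ξ * c₂₀ ξ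
            - c₁₀ ξ ^ 2 - lam * c₂₀ ξ ^ 2 + Q * φ₁ ξ =
          u₀ 0 * u₁ 0 - c₁₁ 0 - c₂₁ 0 - (lam + 1) * c₁₀ 0 * c₂₀ 0
            - c₁₀ 0 ^ 2 - lam * c₂₀ 0 ^ 2 + Q * φ₁ 0) := by

  refine ⟨?_, ?_, ?_⟩
  · intro ξ
    refine const_of_hasDerivAt_zero
      (fun x => z₁ * φ₁ x + c₁₁ x / c₁₀ x + 2 * c₁₀ x + (lam + 1) * c₂₀ x) (fun x => ?_) ξ
    have h := ((((hφ₁ x).const_mul z₁).add ((hc₁₁ x).div (hc₁₀ x) (hc₁₀ne x))).add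
      ((hc₁₀ x).const_mul 2)).add ((hc₂₀ x).const_mul (lam + 1))
    refine h.congr_deriv ?_
    field_simp [hc₁₀ne x, pow_two]
    ring
  · intro ξ
    refine const_of_hasDerivAt_zero
      (fun x => z₂ * φ₁ x + c₂₁ x / c₂₀ x + 2 * lam * c₂₀ x + (lam + 1) * c₁₀ x) (fun x => ?_) ξ
    have h := ((((hφ₁ x).const_mul z₂).add ((hc₂₁ x).div (hc₂₀ x) (hc₂₀ne x))).add
      ((hc₂₀ x).const_mul (2 * lam))).add ((hc₁₀ x).const_mul (lam + 1))
    refine h.congr_deriv ?_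
    field_simp [hc₂₀ne x, pow_two]
    ring
  · intro ξ
    refine const_of_hasDerivAt_zero
      (fun x => u₀ x * u₁ x - c₁₁ x - c₂₁ x - (lam + 1) * c₁₀ x * c₂₀ x
            - c₁₀ x ^ 2 - lam * c₂₀ x ^ 2 + Q * φ₁ x) (fun x => ?_) ξ
    have h := (((((((hu₀ x).mul (hu₁ x)).sub (hc₁₁ x)).sub (hc₂₁ x)).sub
      (((hc₁₀ x).const_mul (lam + 1)).mul (hc₂₀ x))).sub ((hc₁₀ x).pow 2)).sub
      (((hc₂₀ x).pow 2).const_mul lam)).add ((hφ₁ x).const_mul Q)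
    refine h.congr_deriv ?_
    ring
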